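/- Let X = Σ_k^+ with metric d(x,y) = θ^{−n} where θ > 1 and n is the length of the longest common prefix of x and y. Then for every subset Z ⊆ X, dim_H Z = h_top(Z)/log θ, where h_top(Z) is the Bowen topological entropy of the shift on Z. -/

import Mathlib

open Filter Topology Metric Set
open scoped ENNReal NNReal

noncomputable section

namespace BowenNonuniform

variable {X : Type*}

/-- Birkhoff sum `S_n φ(x) = Σ_{k=0}^{n-1} φ(f^k x)`. -/
def birkhoff (f : X → X) (φ : X → ℝ) (n : ℕ) (x : X) : ℝ :=
  ∑ k ∈ Finset.range n, φ (f^[k] x)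

/-- `λ_n(x) = (1/n) S_n log a (x)`. -/
def lyapAvg (f : X → X) (a : X → ℝ) (n : ℕ) (x : X) : ℝ :=
  birkhoff f (fun y => Real.log (a y)) n x / n

/-- Tempered contraction: for every `ε > 0`,
`inf_{n, 0 ≤ k ≤ n} { S_{n-k} log a (f^k x) + n ε } > -∞`. -/
def TemperedContraction (f : X → X) (a : X → ℝ) (x : X) : Prop :=
  ∀ ε > 0, ∃ C : ℝ, ∀ n : ℕ, ∀ k ≤ n,
    C ≤ birkhoff f (fun y => Real.log (a y)) (n - k) (f^[k] x) + n * ε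

/-- Critical exponent of a one-parameter family of outer quantities. -/
def critExp (m : ℝ → ℝ≥0∞) : ℝ≥0∞ := ⨆ (d : ℝ≥0) (_ : m d = ⊤), (d : ℝ≥0∞)

section MetricDefs

variable [MetricSpace X]

/-- `f` is conformal with factor `a`: `a(x) = lim_{y→x} d(f x, f y)/d(x,y)`, `a` continuous. -/
def ConformalWith (f : X → X) (a : X → ℝ) : Prop :=
  Continuous a ∧ ∀ x : X,
    Tendsto (fun y => dist (f x) (f y) / dist x y) (𝓝[≠] x) (𝓝 (a x))

/-- Bowen ball `B(x,n,δ)`. -/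
def bowenBall (f : X → X) (x : X) (n : ℕ) (δ : ℝ) : Set X :=
  {y | ∀ k ≤ n, dist (f^[k] y) (f^[k] x) < δ}

/-- Countable covers of `Z` by Bowen balls of order at least `N`, centred in `Z`. -/
def pressureCovers (f : X → X) (Z : Set X) (N : ℕ) (δ : ℝ) : Set (Set (X × ℕ)) :=
  {E | E.Countable ∧ (∀ p ∈ E, p.1 ∈ Z ∧ N ≤ p.2) ∧ Z ⊆ ⋃ p ∈ E, bowenBall f p.1 p.2 δ}

/-- The pressure set function `m_P(Z,s,φ,N,δ)`. -/
def mP (f : X → X) (φ : X → ℝ) (Z : Set X) (s : ℝ) (N : ℕ) (δ : ℝ) : ℝ≥0∞ :=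
  ⨅ (E : Set (X × ℕ)) (_ : E ∈ pressureCovers f Z N δ),
    ∑' p : E, ENNReal.ofReal (Real.exp (-(p.1.2 : ℝ) * s + birkhoff f φ p.1.2 p.1.1))

/-- `m_P(Z,s,φ,δ) = lim_{N→∞} m_P(Z,s,φ,N,δ)` (increasing in `N`). -/
def mPd (f : X → X) (φ : X → ℝ) (Z : Set X) (s : ℝ) (δ : ℝ) : ℝ≥0∞ :=
  ⨆ N : ℕ, mP f φ Z s N δ

/-- `P_Z(φ,δ)`: critical value of `s ↦ m_P(Z,s,φ,δ)`. -/
def presd (f : X → X) (φ : X → ℝ) (Z : Set X) (δ : ℝ) : ℝ :=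
  sInf {s : ℝ | mPd f φ Z s δ = 0}

/-- The Carathéodory (Pesin–Pitskel') topological pressure `P_Z(φ) = lim_{δ→0} P_Z(φ,δ)`,
realised as a supremum since `δ ↦ P_Z(φ,δ)` is non-increasing in `δ`. -/
def pres (f : X → X) (φ : X → ℝ) (Z : Set X) : ℝ :=
  ⨆ δ : {d : ℝ // 0 < d}, presd f φ Z δ.1

/-- Countable covers of `Z` by metric balls centred in `Z` of radius in `(0,ε]`. -/
def ballCovers (Z : Set X) (ε : ℝ) : Set (Set (X × ℝ)) :=
  {E | E.Countable ∧ (∀ p ∈ E, p.1 ∈ Z ∧ 0 < p.2 ∧ p.2 ≤ ε) ∧ Z ⊆ ⋃ p ∈ E, ball p.1 p.2}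

/-- `m_H^b(Z,s,ε)`: ball covers weighted by `(diam B(x_i,r_i))^s`. -/
def mHb (Z : Set X) (s ε : ℝ) : ℝ≥0∞ :=
  ⨅ (E : Set (X × ℝ)) (_ : E ∈ ballCovers Z ε),
    ∑' p : E, ENNReal.ofReal (diam (ball p.1.1 p.1.2)) ^ s

/-- `m_H^{b'}(Z,s,ε)`: ball covers weighted by `(2 r_i)^s`. -/
def mHb' (Z : Set X) (s ε : ℝ) : ℝ≥0∞ :=
  ⨅ (E : Set (X × ℝ)) (_ : E ∈ ballCovers Z ε),
    ∑' p : E, ENNReal.ofReal (2 * p.1.2) ^ s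

/-- `m_H^b(Z,s) = lim_{ε→0} m_H^b(Z,s,ε)` (the quantity is non-increasing in `ε`). -/
def mHbLim (Z : Set X) (s : ℝ) : ℝ≥0∞ := ⨆ (ε : ℝ) (_ : 0 < ε), mHb Z s ε

def mHb'Lim (Z : Set X) (s : ℝ) : ℝ≥0∞ := ⨆ (ε : ℝ) (_ : 0 < ε), mHb' Z s ε

/-- Countable open covers of `Z` of diameter at most `ε`. -/
def openCovers (Z : Set X) (ε : ℝ) : Set (Set (Set X)) :=
  {E | E.Countable ∧ (∀ U ∈ E, IsOpen U ∧ diam U ≤ ε) ∧ Z ⊆ ⋃₀ E}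

/-- `m_H(Z,s,ε)`: open covers weighted by `(diam U_i)^s`. -/
def mH (Z : Set X) (s ε : ℝ) : ℝ≥0∞ :=
  ⨅ (E : Set (Set X)) (_ : E ∈ openCovers Z ε),
    ∑' U : E, ENNReal.ofReal (diam (U : Set X)) ^ s

/-- `m_H(Z,s) = lim_{ε→0} m_H(Z,s,ε)`. -/
def mHLim (Z : Set X) (s : ℝ) : ℝ≥0∞ := ⨆ (ε : ℝ) (_ : 0 < ε), mH Z s ε

end MetricDefs

/-- The set `X(𝐔)` determined by a string `L` of open sets. -/
def stringSet (f : X → X) (L : List (Set X)) : Set X :=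
  {x | ∀ j < L.length, f^[j] x ∈ L.getD j ∅}

/-- Countable covers of `Z` by strings over the cover `𝒰` of length at least `N`. -/
def stringCovers (f : X → X) (U : Finset (Set X)) (Z : Set X) (N : ℕ) :
    Set (Set (List (Set X))) :=
  {G | G.Countable ∧ (∀ L ∈ G, N ≤ L.length ∧ ∀ V ∈ L, V ∈ U) ∧
       Z ⊆ ⋃ L ∈ G, stringSet f L}

/-- Pesin–Pitskel' set function `m_P'(Z,φ,𝒰,s,N)`. -/
def mPP (f : X → X) (φ : X → ℝ) (U : Finset (Set X)) (Z : Set X) (s : ℝ) (N : ℕ) : ℝ≥0∞ :=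
  ⨅ (G : Set (List (Set X))) (_ : G ∈ stringCovers f U Z N),
    ∑' L : G, ENNReal.ofReal (Real.exp (-s * ((L : List (Set X)).length : ℝ) +
      sSup ((fun x => birkhoff f φ (L : List (Set X)).length x) ''
        stringSet f (L : List (Set X)))))

/-- Pesin–Pitskel' pressure `P'_Z(φ,𝒰)`: critical value of `s`. -/
def presPP (f : X → X) (φ : X → ℝ) (U : Finset (Set X)) (Z : Set X) : ℝ :=
  sInf {s : ℝ | (⨆ N : ℕ, mPP f φ U Z s N) = 0}

open Classical in
/-- Distance on the full one-sided shift determined by `ψ`: `d(x,y) = ψ(x ∧ y)`,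
where `x ∧ y` is the longest common prefix. -/
def shiftDist {k : ℕ} (ψ : List (Fin k) → ℝ) (x y : ℕ → Fin k) : ℝ :=
  if h : x = y then 0
  else ψ (List.ofFn (fun i : Fin (Nat.find (Function.ne_iff.mp h)) => x i))

/-- The word `x_1 … x_n` (prefix of length `n`). -/
def prefixWord {k : ℕ} (x : ℕ → Fin k) (n : ℕ) : List (Fin k) :=
  List.ofFn (fun i : Fin n => x i)

/-- The one-sided shift map. -/
def shiftMap {k : ℕ} (x : ℕ → Fin k) : ℕ → Fin k := fun n => x (n + 1)

end BowenNonuniform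

open BowenNonuniform

section Core
variable {k : ℕ} {θ : ℝ} [m : MetricSpace (ℕ → Fin k)]

/-- cylinders -/
def cylSet (x : ℕ → Fin k) (l : ℕ) : Set (ℕ → Fin k) := {y | ∀ i < l, y i = x i}

lemma mem_cylSet_self (x : ℕ → Fin k) (l : ℕ) : x ∈ cylSet x l := fun _ _ => rfl

lemma cylSet_anti (x : ℕ → Fin k) {l l' : ℕ} (h : l ≤ l') : cylSet x l' ⊆ cylSet x l :=
  fun _ hy i hi => hy i (lt_of_lt_of_le hi h)

variable (hθ : 1 < θ)
  (hdist : ∀ x y : ℕ → Fin k,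
      dist x y = shiftDist (fun w => θ ^ (-(w.length : ℝ))) x y)

include hθ hdist

lemma dist_le_iff (x y : ℕ → Fin k) (l : ℕ) :
    dist x y ≤ θ ^ (-(l : ℝ)) ↔ ∀ i < l, x i = y i := by
  have hθ0 : (0:ℝ) < θ := lt_trans one_pos hθ
  rw [hdist x y, shiftDist]
  split_ifs with h
  · constructor
    · intro _ i _; rw [h]
    · intro _; positivity
  · set N := Nat.find (Function.ne_iff.mp h) with hN
    have hagree : ∀ i < N, x i = y i := fun i hi => by
      have := Nat.find_min (Function.ne_iff.mp h) hi
      simpa using this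
    have hne : x N ≠ y N := Nat.find_spec (Function.ne_iff.mp h)
    simp only [List.length_ofFn]
    rw [Real.rpow_le_rpow_left_iff hθ, neg_le_neg_iff, Nat.cast_le]
    constructor
    · intro hlN i hi; exact hagree i (lt_of_lt_of_le hi hlN)
    · intro hall
      by_contra hlt
      push_neg at hlt
      exact hne (hall N hlt)

lemma dist_lt_iff (x y : ℕ → Fin k) (l : ℕ) :
    dist x y < θ ^ (-(l : ℝ)) ↔ ∀ i < l + 1, x i = y i := by
  have hθ0 : (0:ℝ) < θ := lt_trans one_pos hθ
  rw [hdist x y, shiftDist]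
  split_ifs with h
  · constructor
    · intro _ i _; rw [h]
    · intro _; positivity
  · set N := Nat.find (Function.ne_iff.mp h) with hN
    have hagree : ∀ i < N, x i = y i := fun i hi => by
      have := Nat.find_min (Function.ne_iff.mp h) hi
      simpa using this
    have hne : x N ≠ y N := Nat.find_spec (Function.ne_iff.mp h)
    simp only [List.length_ofFn]
    rw [Real.rpow_lt_rpow_left_iff hθ, neg_lt_neg_iff, Nat.cast_lt]
    constructor
    · intro hlN i hi; exact hagree i (lt_of_lt_of_le hi hlN)
    · intro hall
      by_contra hlt
      push_neg at hlt
      exact hne (hall N (Nat.lt_succ_of_le hlt))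

omit hθ hdist in
lemma shiftMap_iterate (j : ℕ) (x : ℕ → Fin k) (i : ℕ) :
    (shiftMap (k := k))^[j] x i = x (i + j) := by
  induction j generalizing x i with
  | zero => rfl
  | succ n ih =>
    rw [Function.iterate_succ_apply, ih]
    show x (i + n + 1) = x (i + (n + 1))
    ring_nf

lemma bowenBall_eq_cylSet (x : ℕ → Fin k) (n mm : ℕ) :
    bowenBall (shiftMap (k := k)) x n (θ ^ (-(mm : ℝ))) = cylSet x (n + mm + 1) := by
  ext y
  simp only [bowenBall, Set.mem_setOf_eq, cylSet]
  constructor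
  · intro hb l hl
    have hj : min l n ≤ n := min_le_right _ _
    have := (dist_lt_iff hθ hdist ((shiftMap (k := k))^[min l n] y)
      ((shiftMap (k := k))^[min l n] x) mm).mp (hb _ hj)
    have h2 := this (l - min l n) (by omega)
    rwa [shiftMap_iterate, shiftMap_iterate, Nat.sub_add_cancel (min_le_left _ _)] at h2
  · intro hc j hj
    rw [dist_lt_iff hθ hdist]
    intro i hi
    rw [shiftMap_iterate, shiftMap_iterate]
    exact hc (i + j) (by omega)

omit m hdist in
lemma rpow_neg_pos (l : ℝ) : (0:ℝ) < θ ^ (-l) :=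
  Real.rpow_pos_of_pos (lt_trans one_pos hθ) _

lemma ediam_cylSet_le (x : ℕ → Fin k) (l : ℕ) :
    EMetric.diam (cylSet x l) ≤ ENNReal.ofReal (θ ^ (-(l : ℝ))) := by
  apply EMetric.diam_le
  intro y hy z hz
  rw [edist_dist]
  apply ENNReal.ofReal_le_ofReal
  rw [dist_le_iff hθ hdist]
  intro i hi
  rw [hy i hi, hz i hi]

omit m hdist in
lemma tendsto_rpow_neg_mul (c : ℝ) (hc : 0 < c) :
    Tendsto (fun n : ℕ => θ ^ (-(n : ℝ) * c)) atTop (𝓝 0) := by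
  have hθ0 : (0:ℝ) < θ := lt_trans one_pos hθ
  have key : ∀ n : ℕ, θ ^ (-(n : ℝ) * c) = ((θ ^ c)⁻¹) ^ n := by
    intro n
    rw [show -(n : ℝ) * c = -(c * n) by ring, Real.rpow_neg hθ0.le,
      Real.rpow_mul hθ0.le, Real.rpow_natCast, inv_pow]
  simp only [key]
  apply tendsto_pow_atTop_nhds_zero_of_lt_one
  · positivity
  · rw [inv_lt_one_iff₀]
    right
    exact (Real.one_lt_rpow_iff_of_pos hθ0).mpr (Or.inl ⟨hθ, hc⟩)

omit m hdist in
lemma rpow_anti {a b : ℝ} (h : a ≤ b) : θ ^ (-b) ≤ θ ^ (-a) := by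
  rcases eq_or_lt_of_le h with rfl | h'
  · exact le_rfl
  · exact le_of_lt ((Real.rpow_lt_rpow_left_iff hθ).mpr (by linarith))

omit m hdist in
lemma rpow_anti' {t : ℝ} (ht : 0 ≤ t) {a b : ℝ} (h : a ≤ b) :
    θ ^ (-b * t) ≤ θ ^ (-a * t) := by
  rcases eq_or_lt_of_le (by nlinarith : -b * t ≤ -a * t) with h' | h'
  · rw [h']
  · exact le_of_lt ((Real.rpow_lt_rpow_left_iff hθ).mpr h')

omit m hdist in
lemma weight_eq (t s : ℝ) (hs : s = t * Real.log θ) (a : ℝ) :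
    θ ^ (-a * t) = Real.exp (-a * s) := by
  rw [Real.rpow_def_of_pos (lt_trans one_pos hθ), hs]
  congr 1
  ring



omit hθ hdist in
lemma cylSet_covers (hk : 2 ≤ k) (n : ℕ) :
    ∃ f : (Fin n → Fin k) → (ℕ → Fin k), ∀ y : ℕ → Fin k, ∃ w, y ∈ cylSet (f w) n := by
  refine ⟨fun w j => if h : j < n then w ⟨j, h⟩ else ⟨0, by omega⟩, fun y => ?_⟩
  refine ⟨fun i => y i, fun i hi => ?_⟩
  simp [dif_pos hi]

end Core

section Abstract

open MeasureTheory

variable {X : Type*} [MetricSpace X] [MeasurableSpace X] [BorelSpace X]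
variable {θ : ℝ} (hθ : 1 < θ)
variable (F : X → X) (cyl : X → ℕ → Set X)
variable (hc1 : ∀ x l, x ∈ cyl x l)
variable (hc2 : ∀ x l, EMetric.diam (cyl x l) ≤ ENNReal.ofReal (θ ^ (-(l : ℝ))))
variable (hc3 : ∀ (x : X) (n mm : ℕ), bowenBall F x n (θ ^ (-(mm : ℝ))) = cyl x (n + mm + 1))
variable (hc4 : ∀ (S : Set X) (x : X) (l : ℕ), x ∈ S →
  (∀ y ∈ S, dist y x < θ ^ (-(l : ℝ))) → S ⊆ cyl x (l + 1))

include hθ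

omit [MeasurableSpace X] [BorelSpace X] in
lemma lemP2 {Z : Set X} {s δ δ' : ℝ} (hδ : δ ≤ δ') (N : ℕ) (φ : X → ℝ) :
    mP F φ Z s N δ' ≤ mP F φ Z s N δ := by
  apply le_iInf₂
  intro E hE
  refine iInf₂_le E ⟨hE.1, hE.2.1, hE.2.2.trans ?_⟩
  refine Set.iUnion₂_mono fun p hp => ?_
  intro y hy j hj
  exact lt_of_lt_of_le (hy j hj) hδ

omit hθ [MeasurableSpace X] [BorelSpace X] in
lemma lemP1 {Z : Set X} (hZ : Z.Nonempty) {s : ℝ} (hs : s ≤ 0) (N : ℕ) (δ : ℝ) :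
    (1 : ℝ≥0∞) ≤ mP F (fun _ => 0) Z s N δ := by
  apply le_iInf₂
  intro E hE
  obtain ⟨z, hz⟩ := hZ
  have := hE.2.2 hz
  simp only [Set.mem_iUnion] at this
  obtain ⟨p, hp, -⟩ := this
  refine le_trans ?_ (ENNReal.le_tsum ⟨p, hp⟩)
  have : (1:ℝ) ≤ Real.exp (-(p.2 : ℝ) * s + birkhoff F (fun _ => 0) p.2 p.1) := by
    rw [Real.one_le_exp_iff]
    have : birkhoff F (fun _ => 0) p.2 p.1 = 0 := by simp [birkhoff]
    rw [this]
    nlinarith [(by positivity : (0:ℝ) ≤ (p.2:ℝ))]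
  calc (1:ℝ≥0∞) = ENNReal.ofReal 1 := by simp
  _ ≤ _ := ENNReal.ofReal_le_ofReal this

omit hθ [MeasurableSpace X] [BorelSpace X] in
lemma lemPempty (s δ : ℝ) (N : ℕ) (φ : X → ℝ) : mP F φ (∅ : Set X) s N δ = 0 := by
  apply le_antisymm _ zero_le
  refine le_trans (iInf₂_le ∅ ⟨Set.countable_empty, by simp, by simp⟩) ?_
  simp [tsum_empty]

include hc2 hc3 in
lemma lemA (Z : Set X) (t s : ℝ) (ht : 0 ≤ t) (hs : s = t * Real.log θ) (mm : ℕ)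
    (h0 : mPd F (fun _ => 0) Z s (θ ^ (-(mm : ℝ))) = 0) :
    μH[t] Z = 0 := by
  have hθ0 : (0:ℝ) < θ := lt_trans one_pos hθ
  apply le_antisymm _ zero_le
  rw [Measure.hausdorffMeasure_apply]
  apply iSup₂_le
  intro r hr
  obtain ⟨N0, hN0⟩ : ∃ N : ℕ, ENNReal.ofReal (θ ^ (-(N : ℝ))) < r := by
    have h1 : Tendsto (fun n : ℕ => ENNReal.ofReal (θ ^ (-(n : ℝ) * 1))) atTop (𝓝 0) := by
      simpa using (ENNReal.tendsto_ofReal (tendsto_rpow_neg_mul hθ 1 one_pos))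
    simp only [mul_one] at h1
    exact (h1.eventually_lt_const hr).exists
  have hmP : mP F (fun _ => 0) Z s N0 (θ ^ (-(mm : ℝ))) = 0 :=
    le_antisymm (le_trans (le_iSup (fun N => mP F (fun _ => 0) Z s N
      (θ ^ (-(mm : ℝ)))) N0) (le_of_eq h0)) zero_le
  rw [← hmP, mP]
  apply le_iInf₂
  intro E hE
  obtain ⟨f, hf⟩ : ∃ f : ↥E → ℕ, Function.Injective f := by
    have := hE.1.to_subtype
    exact exists_injective_nat _
  classical
  set T : ℕ → Set X := fun j =>
    if h : ∃ p : ↥E, f p = j then cyl (h.choose.1.1) (h.choose.1.2 + mm + 1) else ∅ with hT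
  have hTval : ∀ p : ↥E, T (f p) = cyl p.1.1 (p.1.2 + mm + 1) := by
    intro p
    have hex : ∃ q : ↥E, f q = f p := ⟨p, rfl⟩
    have : hex.choose = p := hf hex.choose_spec
    simp only [hT, dif_pos hex, this]
  have hcov : Z ⊆ ⋃ j, T j := by
    intro z hz
    have := hE.2.2 hz
    simp only [Set.mem_iUnion] at this
    obtain ⟨p, hp, hzp⟩ := this
    rw [hc3] at hzp
    refine Set.mem_iUnion.mpr ⟨f ⟨p, hp⟩, ?_⟩
    rw [hTval ⟨p, hp⟩]
    exact hzp
  have hdiam : ∀ j, EMetric.diam (T j) ≤ r := by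
    intro j
    by_cases h : ∃ p : ↥E, f p = j
    · rw [hT]
      simp only [dif_pos h]
      refine le_trans (hc2 _ _) (le_trans ?_ hN0.le)
      apply ENNReal.ofReal_le_ofReal
      apply rpow_anti hθ
      have := (hE.2.1 h.choose.1 h.choose.2).2
      have h2 : N0 ≤ h.choose.1.2 + mm + 1 := by omega
      exact_mod_cast h2
    · rw [hT]
      simp only [dif_neg h, EMetric.diam_empty]
      exact (Metric.ediam_empty (X := X)).trans_le bot_le
  refine le_trans (iInf_le_of_le T (iInf_le_of_le hcov (iInf_le_of_le hdiam ?_))) le_rfl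
  have hzero : ∀ j ∉ Set.range f, (⨆ _ : (T j).Nonempty, Metric.ediam (T j) ^ t) = 0 := by
    intro j hj
    have h : ¬ ∃ p : ↥E, f p = j := by
      simpa [Set.mem_range] using hj
    have hTj : T j = ∅ := by rw [hT]; exact dif_neg h
    simp [hTj]
  rw [← Function.Injective.tsum_eq hf (Function.support_subset_iff'.mpr hzero)]
  apply ENNReal.tsum_le_tsum
  intro p
  rw [hTval p]
  have hstep : EMetric.diam (cyl p.1.1 (p.1.2 + mm + 1)) ^ t ≤
      ENNReal.ofReal (Real.exp (-(p.1.2 : ℝ) * s + birkhoff F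
        (fun _ => 0) p.1.2 p.1.1)) := by
    have h1 : EMetric.diam (cyl p.1.1 (p.1.2 + mm + 1)) ^ t ≤
        (ENNReal.ofReal (θ ^ (-((p.1.2 + mm + 1 : ℕ) : ℝ)))) ^ t :=
      ENNReal.rpow_le_rpow (hc2 _ _) ht
    refine le_trans h1 ?_
    rw [ENNReal.ofReal_rpow_of_pos (rpow_neg_pos hθ _)]
    apply ENNReal.ofReal_le_ofReal
    have hb : birkhoff F (fun _ => 0) p.1.2 p.1.1 = 0 := by simp [birkhoff]
    rw [hb, add_zero, ← Real.rpow_mul hθ0.le,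
      show Real.exp (-(p.1.2:ℝ) * s) = θ ^ (-(p.1.2:ℝ) * t) from (weight_eq hθ t s hs _).symm]
    apply rpow_anti' hθ ht
    push_cast
    linarith [(by positivity : (0:ℝ) ≤ (mm:ℝ))]
  exact le_trans (iSup_le fun _ => le_rfl) hstep

include hc1 hc3 hc4 in
lemma lemB (Z : Set X) (hZ : Z.Nonempty) (t s : ℝ) (ht : 0 < t) (hs : s = t * Real.log θ)
    (mm : ℕ) (hμ : μH[t] Z = 0) :
    mPd F (fun _ => 0) Z s (θ ^ (-(mm : ℝ))) = 0 := by
  have hθ0 : (0:ℝ) < θ := lt_trans one_pos hθ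
  have hL : (0:ℝ) < Real.log θ := Real.log_pos hθ
  rw [mPd]
  apply le_antisymm _ zero_le
  apply iSup_le
  intro N
  refine ENNReal.le_of_forall_pos_le_add fun ε hε _ => ?_
  rw [zero_add]
  set r : ℝ≥0∞ := ENNReal.ofReal (θ ^ (-((N + mm + 2 : ℕ) : ℝ))) with hr
  have hrpos : 0 < r := ENNReal.ofReal_pos.mpr (rpow_neg_pos hθ _)
  have hinner : (⨅ (C : ℕ → Set X) (_ : Z ⊆ ⋃ n, C n) (_ : ∀ n, EMetric.diam (C n) ≤ r),
      ∑' n, ⨆ _ : (C n).Nonempty, EMetric.diam (C n) ^ t) = 0 := by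
    apply le_antisymm _ zero_le
    rw [← hμ, Measure.hausdorffMeasure_apply]
    exact le_iSup₂ (f := fun (r' : ℝ≥0∞) (_ : 0 < r') =>
      ⨅ (C : ℕ → Set X) (_ : Z ⊆ ⋃ n, C n) (_ : ∀ n, EMetric.diam (C n) ≤ r'),
      ∑' n, ⨆ _ : (C n).Nonempty, EMetric.diam (C n) ^ t) r hrpos
  set c : ℝ≥0∞ := ENNReal.ofReal (θ ^ (((mm : ℝ) + 1) * t)) with hc
  have hc0 : c ≠ 0 := by
    simp only [hc, ne_eq, ENNReal.ofReal_eq_zero, not_le]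
    exact Real.rpow_pos_of_pos hθ0 _
  have hctop : c ≠ ⊤ := ENNReal.ofReal_ne_top
  set γ : ℝ≥0∞ := (ε : ℝ≥0∞) / 2 / c with hγ
  have hγ0 : 0 < γ := by
    apply ENNReal.div_pos _ hctop
    apply (ENNReal.div_pos (by exact_mod_cast hε.ne') (by norm_num)).ne'
  have h2 : (⨅ (C : ℕ → Set X) (_ : Z ⊆ ⋃ n, C n) (_ : ∀ n, EMetric.diam (C n) ≤ r),
      ∑' n, ⨆ _ : (C n).Nonempty, EMetric.diam (C n) ^ t) < γ := hinner ▸ hγ0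
  simp only [iInf_lt_iff] at h2
  obtain ⟨C, hCcov, hCdiam, hCsum⟩ := h2
  -- per-index choice
  have hch : ∀ n : ℕ, ∃ (x : X) (l : ℕ), ((C n ∩ Z).Nonempty →
      x ∈ Z ∧ C n ⊆ cyl x l ∧ N + mm + 2 ≤ l ∧
      ENNReal.ofReal (θ ^ (((mm : ℝ) + 1) * t) * θ ^ (-(l : ℝ) * t)) ≤
        c * (⨆ _ : (C n).Nonempty, EMetric.diam (C n) ^ t) +
          ENNReal.ofReal ((ε : ℝ) / 2 / 2 / 2 ^ n)) := by
    intro n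
    by_cases hne : (C n ∩ Z).Nonempty
    · obtain ⟨x, hxC, hxZ⟩ := hne
      by_cases hD : EMetric.diam (C n) = 0
      · -- diameter zero
        obtain ⟨l, hl1, hl2⟩ : ∃ l : ℕ, N + mm + 2 ≤ l ∧
            θ ^ (((mm : ℝ) + 1) * t) * θ ^ (-(l : ℝ) * t) ≤ (ε : ℝ) / 2 / 2 / 2 ^ n := by
          have hb : (0:ℝ) < ((ε : ℝ) / 2 / 2 / 2 ^ n) / θ ^ (((mm : ℝ) + 1) * t) := by
            apply div_pos
            · positivity
            · exact Real.rpow_pos_of_pos hθ0 _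
          have hev := (tendsto_rpow_neg_mul hθ t ht).eventually_le_const hb
          obtain ⟨l, hlge, hl⟩ := (hev.and (eventually_ge_atTop (N + mm + 2))).exists
          refine ⟨l, hl, ?_⟩
          rw [mul_comm, ← le_div_iff₀ (Real.rpow_pos_of_pos hθ0 _)]
          exact hlge
        refine ⟨x, l, fun _ => ⟨hxZ, ?_, hl1, ?_⟩⟩
        · intro y hy
          have : edist y x = 0 := le_antisymm
            (le_trans (EMetric.edist_le_diam_of_mem hy hxC) (le_of_eq hD)) zero_le
          rw [edist_eq_zero] at this
          rw [this]
          exact hc1 x l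
        · refine le_trans (ENNReal.ofReal_le_ofReal hl2) ?_
          exact le_add_self
      · -- positive diameter
        have hDtop : EMetric.diam (C n) ≠ ⊤ :=
          ne_top_of_le_ne_top ENNReal.ofReal_ne_top (hCdiam n)
        set Dr : ℝ := (EMetric.diam (C n)).toReal with hDr
        have hDr0 : 0 < Dr := ENNReal.toReal_pos hD hDtop
        have hDrle : Dr ≤ θ ^ (-((N + mm + 2 : ℕ) : ℝ)) := by
          rw [hDr]
          exact ENNReal.toReal_le_of_le_ofReal (le_of_lt (rpow_neg_pos hθ _)) (hCdiam n)
        have hex : ∃ l : ℕ, θ ^ (-(l : ℝ)) ≤ Dr := by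
          have hev := (by simpa using tendsto_rpow_neg_mul hθ 1 one_pos :
            Tendsto (fun n : ℕ => θ ^ (-(n : ℝ))) atTop (𝓝 0)).eventually_le_const hDr0
          exact hev.exists
        set l : ℕ := Nat.find hex with hldef
        have hl : θ ^ (-(l : ℝ)) ≤ Dr := Nat.find_spec hex
        have hlge : N + mm + 2 ≤ l := by
          by_contra hcon
          push_neg at hcon
          have h3 : θ ^ (-((N + mm + 2 : ℕ) : ℝ)) < θ ^ (-(l : ℝ)) := by
            rw [Real.rpow_lt_rpow_left_iff hθ]
            have hcast : (l : ℝ) < (N : ℝ) + (mm : ℝ) + 2 := by exact_mod_cast hcon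
            push_cast
            linarith
          linarith
        have hl1 : 1 ≤ l := by omega
        have hprev : Dr < θ ^ (-((l - 1 : ℕ) : ℝ)) := by
          have := Nat.find_min hex (show l - 1 < l by omega)
          linarith [not_le.mp this]
        refine ⟨x, l, fun _ => ⟨hxZ, ?_, hlge, ?_⟩⟩
        · have hsub := hc4 (C n) x (l - 1) hxC ?_
          · rwa [show l - 1 + 1 = l by omega] at hsub
          · intro y hy
            have h4 : dist y x ≤ Dr := by
              rw [dist_edist, hDr]
              exact ENNReal.toReal_mono hDtop (EMetric.edist_le_diam_of_mem hy hxC)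
            linarith
        · have hg : (⨆ _ : (C n).Nonempty, EMetric.diam (C n) ^ t) =
              EMetric.diam (C n) ^ t := iSup_pos ⟨x, hxC⟩
          have hle : ENNReal.ofReal (θ ^ (-(l : ℝ) * t)) ≤ EMetric.diam (C n) ^ t := by
            have h5 : θ ^ (-(l : ℝ) * t) ≤ Dr ^ t := by
              rw [Real.rpow_mul hθ0.le]
              exact Real.rpow_le_rpow (le_of_lt (rpow_neg_pos hθ _)) hl ht.le
            calc ENNReal.ofReal (θ ^ (-(l : ℝ) * t)) ≤ ENNReal.ofReal (Dr ^ t) :=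
              ENNReal.ofReal_le_ofReal h5
            _ = (ENNReal.ofReal Dr) ^ t := (ENNReal.ofReal_rpow_of_pos hDr0).symm
            _ = EMetric.diam (C n) ^ t := by rw [hDr, ENNReal.ofReal_toReal hDtop]
          rw [ENNReal.ofReal_mul (le_of_lt (Real.rpow_pos_of_pos hθ0 _))]
          refine le_trans (mul_le_mul_right hle _) ?_
          rw [hg]
          exact le_self_add
    · exact ⟨hZ.some, 0, fun h => absurd h hne⟩
  choose xf lf hspec using hch
  classical
  set I : Set ℕ := {n | (C n ∩ Z).Nonempty} with hI
  set g : ℕ → X × ℕ := fun n => (xf n, lf n - (mm + 1)) with hgdef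
  have hEcov : (g '' I) ∈ pressureCovers F Z N (θ ^ (-(mm : ℝ))) := by
    refine ⟨(Set.to_countable I).image g, ?_, ?_⟩
    · rintro p ⟨n, hn, rfl⟩
      obtain spec := hspec n hn
      exact ⟨spec.1, by have := spec.2.2.1; simp only [hgdef]; omega⟩
    · intro z hz
      obtain ⟨n, hzC⟩ := Set.mem_iUnion.mp (hCcov hz)
      have hn : n ∈ I := ⟨z, hzC, hz⟩
      obtain spec := hspec n hn
      refine Set.mem_iUnion₂.mpr ⟨g n, Set.mem_image_of_mem _ hn, ?_⟩
      have hmm1 : mm + 1 ≤ lf n := by have := spec.2.2.1; omega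
      show z ∈ bowenBall F (xf n) (lf n - (mm + 1)) (θ ^ (-(mm : ℝ)))
      rw [hc3, show lf n - (mm + 1) + mm + 1 = lf n by omega]
      exact spec.2.1 hzC
  refine le_trans (iInf₂_le (g '' I) hEcov) ?_
  have hsurj : Function.Surjective
      (fun n : ↥I => (⟨g n, Set.mem_image_of_mem g n.2⟩ : ↥(g '' I))) := by
    rintro ⟨p, hp⟩
    obtain ⟨n, hn, rfl⟩ := hp
    exact ⟨⟨n, hn⟩, rfl⟩
  calc ∑' (p : ↥(g '' I)), ENNReal.ofReal (Real.exp (-(p.1.2 : ℝ) * s +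
        birkhoff F (fun _ => 0) p.1.2 p.1.1))
      ≤ ∑' (n : ↥I), ENNReal.ofReal (Real.exp (-((g n.1).2 : ℝ) * s +
        birkhoff F (fun _ => 0) (g n.1).2 (g n.1).1)) :=
      ENNReal.tsum_le_tsum_comp_of_surjective hsurj _
    _ ≤ ∑' (n : ↥I), (c * (⨆ _ : (C n.1).Nonempty, EMetric.diam (C n.1) ^ t) +
        ENNReal.ofReal ((ε : ℝ) / 2 / 2 / 2 ^ (n.1 : ℕ))) := by
        apply ENNReal.tsum_le_tsum
        intro n
        obtain spec := hspec n.1 n.2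
        have hb0 : birkhoff F (fun _ => 0) (g n.1).2 (g n.1).1 = 0 := by simp [birkhoff]
        rw [hb0, add_zero]
        have hmm1 : mm + 1 ≤ lf n.1 := by have := spec.2.2.1; omega
        have hcast : (((g n.1).2) : ℝ) = (lf n.1 : ℝ) - ((mm : ℝ) + 1) := by
          show ((lf n.1 - (mm + 1) : ℕ) : ℝ) = _
          push_cast [Nat.cast_sub hmm1]
          ring
        have hexp : Real.exp (-((g n.1).2 : ℝ) * s) =
            θ ^ (((mm : ℝ) + 1) * t) * θ ^ (-(lf n.1 : ℝ) * t) := by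
          rw [← Real.rpow_add hθ0,
            show ((mm : ℝ) + 1) * t + (-(lf n.1 : ℝ) * t) =
              -((lf n.1 : ℝ) - ((mm : ℝ) + 1)) * t by ring,
            weight_eq hθ t s hs, hcast]
        rw [hexp]
        exact spec.2.2.2
    _ ≤ ∑' (n : ℕ), (c * (⨆ _ : (C n).Nonempty, EMetric.diam (C n) ^ t) +
        ENNReal.ofReal ((ε : ℝ) / 2 / 2 / 2 ^ n)) :=
      ENNReal.tsum_comp_le_tsum_of_injective Subtype.val_injective _
    _ = c * (∑' n, ⨆ _ : (C n).Nonempty, EMetric.diam (C n) ^ t) +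
        ∑' (n : ℕ), ENNReal.ofReal ((ε : ℝ) / 2 / 2 / 2 ^ n) := by
        rw [ENNReal.tsum_add, ENNReal.tsum_mul_left]
    _ ≤ c * γ + ENNReal.ofReal ((ε : ℝ) / 2) := by
        apply add_le_add (mul_le_mul_right hCsum.le c)
        rw [← ENNReal.ofReal_tsum_of_nonneg (fun n => by positivity)
          (summable_geometric_two' ((ε : ℝ) / 2))]
        exact ENNReal.ofReal_le_ofReal (le_of_eq (tsum_geometric_two' ((ε : ℝ) / 2)))
    _ ≤ (ε : ℝ≥0∞) / 2 + (ε : ℝ≥0∞) / 2 := by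
        apply add_le_add
        · rw [hγ]
          exact le_of_eq (ENNReal.mul_div_cancel hc0 hctop)
        · rw [ENNReal.ofReal_div_of_pos (by norm_num), ENNReal.ofReal_coe_nnreal]
          simp
    _ = ε := ENNReal.add_halves _

include hc2 in
lemma lemC (κ : ℕ) (hκ : 1 ≤ κ)
    (hc5 : ∀ n : ℕ, ∃ f : (Fin n → Fin κ) → X, ∀ y : X, ∃ w, y ∈ cyl (f w) n)
    (Z : Set X) (t : ℝ) (htk : Real.log κ < t * Real.log θ) :
    μH[t] Z = 0 := by
  have hθ0 : (0:ℝ) < θ := lt_trans one_pos hθ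
  have hL : (0:ℝ) < Real.log θ := Real.log_pos hθ
  have hκ0 : (0:ℝ) < (κ : ℝ) := by exact_mod_cast hκ
  have ht0 : 0 ≤ t := by
    by_contra hcon
    push_neg at hcon
    nlinarith [Real.log_nonneg (by exact_mod_cast hκ : (1:ℝ) ≤ (κ:ℝ))]
  choose f hf using hc5
  have key := MeasureTheory.Measure.hausdorffMeasure_le_liminf_tsum (β := ℕ) (ι := fun n => Fin n → Fin κ)
    t Z (l := atTop) (fun n => ENNReal.ofReal (θ ^ (-(n : ℝ))))
    (by
      have h1 := ENNReal.tendsto_ofReal (tendsto_rpow_neg_mul hθ 1 one_pos)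
      rw [ENNReal.ofReal_zero] at h1
      simpa using h1)
    (fun n w => cyl (f n w) n)
    (Eventually.of_forall fun n w => hc2 _ _)
    (Eventually.of_forall fun n => fun z _ => Set.mem_iUnion.mpr (hf n z))
  refine le_antisymm (le_trans key ?_) zero_le
  have hb : ∀ n : ℕ, (∑' w : Fin n → Fin κ, EMetric.diam (cyl (f n w) n) ^ t) ≤
      ((κ ^ n : ℕ) : ℝ≥0∞) * ENNReal.ofReal (θ ^ (-(n : ℝ) * t)) := by
    intro n
    have hterm : ∀ w : Fin n → Fin κ, EMetric.diam (cyl (f n w) n) ^ t ≤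
        ENNReal.ofReal (θ ^ (-(n : ℝ) * t)) := by
      intro w
      refine le_trans (ENNReal.rpow_le_rpow (hc2 _ _) ht0) ?_
      rw [ENNReal.ofReal_rpow_of_pos (rpow_neg_pos hθ _), ← Real.rpow_mul hθ0.le]
    calc (∑' w : Fin n → Fin κ, EMetric.diam (cyl (f n w) n) ^ t)
        ≤ ∑' _ : Fin n → Fin κ, ENNReal.ofReal (θ ^ (-(n : ℝ) * t)) :=
        ENNReal.tsum_le_tsum hterm
      _ = ((κ ^ n : ℕ) : ℝ≥0∞) * ENNReal.ofReal (θ ^ (-(n : ℝ) * t)) := by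
        rw [tsum_fintype]
        simp [Finset.sum_const, nsmul_eq_mul, Fintype.card_fun]
  have hlt1 : (κ : ℝ) * θ ^ (-t) < 1 := by
    have h1 : (κ : ℝ) < θ ^ t := by
      have h2 : θ ^ t = Real.exp (t * Real.log θ) := by
        rw [Real.rpow_def_of_pos hθ0]; ring_nf
      rw [h2, ← Real.exp_log hκ0]
      exact Real.exp_lt_exp.mpr htk
    have h3 : (0:ℝ) < θ ^ t := Real.rpow_pos_of_pos hθ0 _
    rw [Real.rpow_neg hθ0.le]
    rw [mul_inv_lt_iff₀ h3, one_mul]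
    exact h1
  have hlim : Tendsto (fun n : ℕ => ((κ ^ n : ℕ) : ℝ≥0∞) *
      ENNReal.ofReal (θ ^ (-(n : ℝ) * t))) atTop (𝓝 0) := by
    have heq : ∀ n : ℕ, ((κ ^ n : ℕ) : ℝ≥0∞) * ENNReal.ofReal (θ ^ (-(n : ℝ) * t)) =
        ENNReal.ofReal (((κ : ℝ) * θ ^ (-t)) ^ n) := by
      intro n
      rw [mul_pow, ← ENNReal.ofReal_natCast (κ ^ n), ← ENNReal.ofReal_mul (by positivity)]
      congr 1
      push_cast
      congr 1
      rw [← Real.rpow_natCast (θ ^ (-t)) n, ← Real.rpow_mul hθ0.le]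
      congr 1
      ring
    simp only [heq]
    have := ENNReal.tendsto_ofReal
      (tendsto_pow_atTop_nhds_zero_of_lt_one (by positivity) hlt1)
    simpa using this
  refine le_trans (liminf_le_liminf (Eventually.of_forall hb)) ?_
  rw [hlim.liminf_eq]

end Abstract

attribute [-instance] Pi.topologicalSpace MeasurableSpace.pi


set_option maxHeartbeats 1000000
open MeasureTheory

theorem stmt16 (k : ℕ) (hk : 2 ≤ k) (θ : ℝ) (hθ : 1 < θ)
    [m : MetricSpace (ℕ → Fin k)]
    (hdist : ∀ x y : ℕ → Fin k,
      dist x y = shiftDist (fun w => θ ^ (-(w.length : ℝ))) x y) :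
    ∀ Z : Set (ℕ → Fin k),
      dimH Z = ENNReal.ofReal
        (pres (shiftMap (k := k)) (fun _ => (0 : ℝ)) Z / Real.log θ) := by
  intro Z
  have hθ0 : (0:ℝ) < θ := lt_trans one_pos hθ
  have hL : (0:ℝ) < Real.log θ := Real.log_pos hθ
  have hLne : Real.log θ ≠ 0 := ne_of_gt hL
  borelize (ℕ → Fin k)
  set F := shiftMap (k := k) with hF
  have hc1 : ∀ (x : ℕ → Fin k) (l : ℕ), x ∈ cylSet x l := mem_cylSet_self
  have hc2 : ∀ (x : ℕ → Fin k) (l : ℕ),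
      EMetric.diam (cylSet x l) ≤ ENNReal.ofReal (θ ^ (-(l : ℝ))) :=
    fun x l => ediam_cylSet_le hθ hdist x l
  have hc3 : ∀ (x : ℕ → Fin k) (n mm : ℕ),
      bowenBall F x n (θ ^ (-(mm : ℝ))) = cylSet x (n + mm + 1) :=
    fun x n mm => bowenBall_eq_cylSet hθ hdist x n mm
  have hc4 : ∀ (S : Set (ℕ → Fin k)) (x : ℕ → Fin k) (l : ℕ), x ∈ S →
      (∀ y ∈ S, dist y x < θ ^ (-(l : ℝ))) → S ⊆ cylSet x (l + 1) := by
    intro S x l hx h y hy i hi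
    exact (dist_lt_iff hθ hdist y x l).mp (h y hy) i hi
  have hc5 := cylSet_covers (k := k) hk
  by_cases hZ : Z.Nonempty
  case neg =>
    rw [Set.not_nonempty_iff_eq_empty] at hZ
    subst hZ
    rw [dimH_empty]
    have hpresd : ∀ δ : ℝ, presd F (fun _ => (0:ℝ)) ∅ δ = 0 := by
      intro δ
      have hmPd : ∀ s : ℝ, mPd F (fun _ => (0:ℝ)) ∅ s δ = 0 := by
        intro s
        rw [mPd]
        simp [lemPempty F s δ]
      rw [presd]
      have huniv : {s : ℝ | mPd F (fun _ => (0:ℝ)) ∅ s δ = 0} = Set.univ :=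
        Set.eq_univ_of_forall hmPd
      rw [huniv]
      apply Real.sInf_of_not_bddBelow
      rintro ⟨b, hb⟩
      have := hb (Set.mem_univ (b - 1))
      linarith
    have hval : ∀ δ : {d : ℝ // 0 < d}, presd F (fun _ => (0:ℝ)) ∅ δ.1 = 0 :=
      fun δ => hpresd δ.1
    rw [pres]
    simp only [hval]
    rw [ciSup_const]
    simp
  case pos =>
    set T : Set ℝ := {t : ℝ | 0 < t ∧ μH[t] Z = 0} with hT
    have hk1 : (1:ℝ) ≤ (k:ℝ) := by exact_mod_cast le_trans one_le_two hk
    have hTne : T.Nonempty := by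
      refine ⟨Real.log k / Real.log θ + 1, ?_, ?_⟩
      · have := Real.log_nonneg hk1
        positivity
      · refine lemC hθ cylSet hc2 k (le_trans one_le_two hk) hc5 Z _ ?_
        rw [add_mul, div_mul_cancel₀ _ hLne]
        linarith
    have hTbdd : BddBelow T := ⟨0, fun t ht => ht.1.le⟩
    set t0 := sInf T with ht0def
    have ht00 : 0 ≤ t0 := le_csInf hTne fun t ht => ht.1.le
    have hTup : ∀ t ∈ T, ∀ t', t ≤ t' → t' ∈ T := by
      intro t ht t' htt'
      rcases eq_or_lt_of_le htt' with rfl | hlt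
      · exact ht
      · refine ⟨lt_of_lt_of_le ht.1 htt', ?_⟩
        refine (Measure.hausdorffMeasure_zero_or_top hlt Z).resolve_right ?_
        rw [ht.2]
        simp
    have hdimH : dimH Z = ENNReal.ofReal t0 := by
      apply le_antisymm
      · apply dimH_le
        intro d' hd'
        have hd'le : (d' : ℝ) ≤ t0 := by
          by_contra hcon
          push_neg at hcon
          obtain ⟨tt, httT, htt⟩ := exists_lt_of_csInf_lt hTne hcon
          have hmem : ((d' : ℝ) ∈ T) := hTup tt httT _ htt.le
          rw [hmem.2] at hd'
          simp at hd'
        calc (d' : ℝ≥0∞) = ENNReal.ofReal (d' : ℝ) := ENNReal.ofReal_coe_nnreal.symm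
          _ ≤ ENNReal.ofReal t0 := ENNReal.ofReal_le_ofReal hd'le
      · rcases eq_or_lt_of_le ht00 with h0 | h0
        · rw [← h0]
          simp
        · by_contra hcon
          push_neg at hcon
          obtain ⟨rr, hrr0, hrr1, hrr2⟩ := ENNReal.lt_iff_exists_real_btwn.mp hcon
          have hrrt0 : rr < t0 := by
            by_contra hcc
            push_neg at hcc
            exact absurd hrr2 (not_lt.mpr (ENNReal.ofReal_le_ofReal hcc))
          obtain ⟨t', ht'1, ht'2⟩ := exists_between (show max rr 0 < t0 from max_lt hrrt0 h0)
          have ht'pos : 0 < t' := lt_of_le_of_lt (le_max_right rr 0) ht'1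
          have ht'notT : t' ∉ T := fun h => absurd (csInf_le hTbdd h) (not_le.mpr ht'2)
          have hμne : μH[t'] Z ≠ 0 := fun h => ht'notT ⟨ht'pos, h⟩
          have hle : (↑t'.toNNReal : ℝ≥0∞) ≤ dimH Z :=
            le_dimH_of_hausdorffMeasure_ne_zero (d := t'.toNNReal)
              (by rwa [Real.coe_toNNReal _ ht'pos.le])
          have hle' : ENNReal.ofReal t' ≤ dimH Z := hle
          have hcontr : ENNReal.ofReal t' < ENNReal.ofReal t' :=
            lt_of_le_of_lt hle' (lt_of_lt_of_le hrr1
              (ENNReal.ofReal_le_ofReal (le_trans (le_max_left rr 0) ht'1.le)))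
          exact absurd hcontr (lt_irrefl _)
    set Sμ : Set ℝ := {s : ℝ | 0 < s ∧ μH[s / Real.log θ] Z = 0} with hSμ
    have hkey : ∀ mm : ℕ,
        {s : ℝ | mPd F (fun _ => (0:ℝ)) Z s (θ ^ (-(mm : ℝ))) = 0} = Sμ := by
      intro mm
      ext s
      simp only [Set.mem_setOf_eq, hSμ]
      constructor
      · intro h
        have hspos : 0 < s := by
          by_contra hcc
          push_neg at hcc
          have h1 : (1:ℝ≥0∞) ≤ mPd F (fun _ => (0:ℝ)) Z s (θ ^ (-(mm : ℝ))) := by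
            rw [mPd]
            exact le_trans (lemP1 F hZ hcc 0 _)
              (le_iSup (fun N => mP F (fun _ => (0:ℝ)) Z s N (θ ^ (-(mm : ℝ)))) 0)
          rw [h] at h1
          simp at h1
        refine ⟨hspos, ?_⟩
        exact lemA hθ F cylSet hc2 hc3 Z (s / Real.log θ) s (div_pos hspos hL).le
          (div_mul_cancel₀ s hLne).symm mm h
      · rintro ⟨hspos, hμ⟩
        exact lemB hθ F cylSet hc1 hc3 hc4 Z hZ (s / Real.log θ) s (div_pos hspos hL)
          (div_mul_cancel₀ s hLne).symm mm hμ
    have hSμne : Sμ.Nonempty := by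
      obtain ⟨t, ht⟩ := hTne
      exact ⟨t * Real.log θ, mul_pos ht.1 hL, by
        rw [mul_div_cancel_right₀ _ hLne]
        exact ht.2⟩
    have hSμbdd : BddBelow Sμ := ⟨0, fun s hs => hs.1.le⟩
    have hSinf : sInf Sμ = Real.log θ * t0 := by
      apply le_antisymm
      · have hlb : ∀ t ∈ T, sInf Sμ / Real.log θ ≤ t := by
          intro t ht
          have hmem : t * Real.log θ ∈ Sμ := ⟨mul_pos ht.1 hL, by
            rw [mul_div_cancel_right₀ _ hLne]
            exact ht.2⟩
          have h2 := csInf_le hSμbdd hmem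
          rw [div_le_iff₀ hL]
          exact h2
        have h3 := le_csInf hTne hlb
        rw [div_le_iff₀ hL] at h3
        linarith
      · apply le_csInf hSμne
        intro s hs
        have h4 : t0 ≤ s / Real.log θ := csInf_le hTbdd ⟨div_pos hs.1 hL, hs.2⟩
        rw [le_div_iff₀ hL] at h4
        linarith
    have hbddS : ∀ δ : ℝ, BddBelow {s : ℝ | mPd F (fun _ => (0:ℝ)) Z s δ = 0} := by
      intro δ
      refine ⟨0, fun s hs => ?_⟩
      by_contra hcc
      push_neg at hcc
      have h1 : (1:ℝ≥0∞) ≤ mPd F (fun _ => (0:ℝ)) Z s δ := by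
        rw [mPd]
        exact le_trans (lemP1 F hZ hcc.le 0 δ)
          (le_iSup (fun N => mP F (fun _ => (0:ℝ)) Z s N δ) 0)
      rw [Set.mem_setOf_eq] at hs
      rw [hs] at h1
      simp at h1
    have hsub : ∀ δ : ℝ, 0 < δ → Sμ ⊆ {s : ℝ | mPd F (fun _ => (0:ℝ)) Z s δ = 0} := by
      intro δ hδ s hsS
      obtain ⟨mm, hmm⟩ : ∃ mm : ℕ, θ ^ (-(mm : ℝ)) ≤ δ := by
        have h1 := (tendsto_rpow_neg_mul hθ 1 one_pos).eventually_le_const hδ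
        simpa using h1.exists
      have h2 : mPd F (fun _ => (0:ℝ)) Z s (θ ^ (-(mm : ℝ))) = 0 :=
        (Set.ext_iff.mp (hkey mm) s).mpr hsS
      have h3 : mPd F (fun _ => (0:ℝ)) Z s δ ≤ mPd F (fun _ => (0:ℝ)) Z s (θ ^ (-(mm : ℝ))) :=
        iSup_mono fun N => lemP2 hθ F hmm N _
      exact le_antisymm (le_trans h3 h2.le) zero_le
    have hpresd_le : ∀ δ : ℝ, 0 < δ → presd F (fun _ => (0:ℝ)) Z δ ≤ sInf Sμ :=
      fun δ hδ => csInf_le_csInf (hbddS δ) hSμne (hsub δ hδ)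
    have hS1 : {s : ℝ | mPd F (fun _ => (0:ℝ)) Z s 1 = 0} = Sμ := by
      have h0 := hkey 0
      rw [show θ ^ (-((0:ℕ) : ℝ)) = (1:ℝ) by simp] at h0
      exact h0
    have hpresd_one : presd F (fun _ => (0:ℝ)) Z 1 = sInf Sμ := by
      rw [presd, hS1]
    have hpres : pres F (fun _ => (0:ℝ)) Z = sInf Sμ := by
      rw [pres]
      apply le_antisymm
      · exact ciSup_le fun δ => hpresd_le δ.1 δ.2
      · have hbdd : BddAbove (Set.range fun δ : {d : ℝ // 0 < d} =>
            presd F (fun _ => (0:ℝ)) Z δ.1) := by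
          refine ⟨sInf Sμ, ?_⟩
          rintro x ⟨δ, rfl⟩
          exact hpresd_le δ.1 δ.2
        have h5 := le_ciSup hbdd (⟨1, one_pos⟩ : {d : ℝ // 0 < d})
        rw [hpresd_one] at h5
        exact h5
    rw [hdimH, hpres, hSinf]
    congr 1
    rw [mul_comm, mul_div_assoc, div_self hLne, mul_one]

set_option maxHeartbeats 1000000
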